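/- Let k be an algebraically closed field of characteristic p, and let γ₁,…,γ_r ∈ k be elements that are linearly independent over the subfield 𝔽_{p^q} ⊆ k. Then the Moore-type matrix A ∈ M_r(k) whose (i,j) entry is γ_i^{p^{q(j-1)}} is invertible. -/

import Mathlib

open Polynomial

private lemma fixed_pow_pow {k : Type*} [Monoid k] {x : k} {m : ℕ} (hx : x ^ m = x) :
    ∀ j : ℕ, x ^ (m ^ j) = x := by
  intro j
  induction j with
  | zero => simp
  | succ j ih => rw [pow_succ, pow_mul, ih, hx]

/-- Moore determinant criterion: if `γ₁,…,γ_r` are elements of an algebraically closed field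
`k` of characteristic `p` that are linearly independent over the finite subfield `𝔽_{p^q}`
(the fixed field of `x ↦ x^{p^q}`), then the Moore-type matrix with entries
`γ_i^{p^{q(j-1)}}` is invertible. -/
theorem moore_matrix_invertible
    (p q r : ℕ) (hp : p.Prime) (hq : 0 < q)
    (k : Type*) [Field k] [CharP k p] [IsAlgClosed k]
    (γ : Fin r → k)
    (hind : ∀ c : Fin r → k, (∀ i, c i ^ (p ^ q) = c i) →
      (∑ i, c i * γ i = 0) → c = 0) :
    IsUnit (Matrix.of (fun i j : Fin r => γ i ^ (p ^ (q * (j : ℕ)))) :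
      Matrix (Fin r) (Fin r) k) := by
  classical
  haveI : Fact p.Prime := ⟨hp⟩
  haveI : ExpChar k p := ExpChar.prime hp
  rcases Nat.eq_zero_or_pos r with hr | hr
  · subst hr
    exact isUnit_of_subsingleton _
  by_contra hM
  rw [Matrix.isUnit_iff_isUnit_det, isUnit_iff_ne_zero, not_ne_iff] at hM
  obtain ⟨d, hd0, hd⟩ := Matrix.exists_mulVec_eq_zero_iff.mpr hM
  have hpq : 1 < p ^ q := Nat.one_lt_pow hq.ne' hp.one_lt
  -- the additive polynomial
  set f : k[X] := ∑ j : Fin r, Polynomial.monomial (p ^ (q * (j : ℕ))) (d j) with hf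
  have heval : ∀ i, ∑ j : Fin r, d j * γ i ^ (p ^ (q * (j : ℕ))) = 0 := by
    intro i
    have h := congrFun hd i
    simp only [Matrix.mulVec, dotProduct, Matrix.of_apply, Pi.zero_apply] at h
    rw [← h]
    exact Finset.sum_congr rfl fun j _ => mul_comm _ _
  have hfeval : ∀ x : k, f.eval x = ∑ j : Fin r, d j * x ^ (p ^ (q * (j : ℕ))) := by
    intro x
    simp [hf, Polynomial.eval_finset_sum, Polynomial.eval_monomial]
  have hdeg : f.natDegree ≤ p ^ (q * (r - 1)) := by
    apply Polynomial.natDegree_sum_le_of_forall_le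
    intro j _
    exact (Polynomial.natDegree_monomial_le _).trans
      (Nat.pow_le_pow_right hp.pos (Nat.mul_le_mul_left q (Nat.le_pred_of_lt j.isLt)))
  -- the fixed field
  set g : k[X] := X ^ (p ^ q) - X with hg
  have hg0 : g ≠ 0 := FiniteField.X_pow_card_sub_X_ne_zero k hpq
  have hmem : ∀ x : k, x ∈ g.rootSet k ↔ x ^ (p ^ q) = x := by
    intro x
    rw [Polynomial.mem_rootSet]
    simp [hg, sub_eq_zero, hg0, (sub_eq_zero.not.mp hg0 : ¬ (X : k[X]) ^ p ^ q = X)]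
  -- every 𝔽_{p^q}-combination of the γ's is a root of f
  have hF : ∀ c : Fin r → g.rootSet k, f.eval (∑ i, (c i : k) * γ i) = 0 := by
    intro c
    have hcfix : ∀ i, (c i : k) ^ (p ^ q) = (c i : k) := fun i => (hmem _).1 (c i).2
    rw [hfeval]
    calc ∑ j : Fin r, d j * (∑ i, (c i : k) * γ i) ^ (p ^ (q * (j : ℕ)))
        = ∑ j : Fin r, d j * ∑ i, (c i : k) * γ i ^ (p ^ (q * (j : ℕ))) := by
          refine Finset.sum_congr rfl fun j _ => ?_
          rw [sum_pow_char_pow]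
          congr 1
          refine Finset.sum_congr rfl fun i _ => ?_
          rw [mul_pow]
          congr 1
          rw [pow_mul]
          exact fixed_pow_pow (hcfix i) _
      _ = ∑ i, (c i : k) * ∑ j : Fin r, d j * γ i ^ (p ^ (q * (j : ℕ))) := by
          simp_rw [Finset.mul_sum]
          rw [Finset.sum_comm]
          exact Finset.sum_congr rfl fun i _ => Finset.sum_congr rfl fun j _ => by ring
      _ = 0 := by simp [heval]
  -- the combinations are pairwise distinct
  have hΦinj : Function.Injective (fun c : Fin r → g.rootSet k => ∑ i, (c i : k) * γ i) := by
    intro c c' hcc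
    simp only at hcc
    have h1 : ∀ i, ((c i : k) - (c' i : k)) ^ (p ^ q) = (c i : k) - (c' i : k) := by
      intro i
      rw [sub_pow_char_pow, (hmem _).1 (c i).2, (hmem _).1 (c' i).2]
    have h2 : ∑ i, ((c i : k) - (c' i : k)) * γ i = 0 := by
      simp only [sub_mul, Finset.sum_sub_distrib, hcc, sub_self]
    have h3 := hind _ h1 h2
    funext i
    exact Subtype.ext (sub_eq_zero.mp (congrFun h3 i))
  -- counting
  have hgsep : g.Separable := galois_poly_separable p (p ^ q) (dvd_pow_self p hq.ne')
  have hcard : Fintype.card (Fin r → g.rootSet k) = p ^ (q * r) := by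
    rw [Fintype.card_fun,
      Polynomial.card_rootSet_eq_natDegree hgsep (IsAlgClosed.splits _),
      FiniteField.X_pow_card_sub_X_natDegree_eq k hpq, Fintype.card_fin, ← pow_mul]
  have hfz : f = 0 := by
    apply Polynomial.eq_zero_of_natDegree_lt_card_of_eval_eq_zero f hΦinj hF
    rw [hcard]
    refine lt_of_le_of_lt hdeg (Nat.pow_lt_pow_right hp.one_lt ?_)
    exact mul_lt_mul_of_pos_left (Nat.sub_lt hr one_pos) hq
  -- coefficients of f recover d
  apply hd0
  funext j
  have hcoeff : f.coeff (p ^ (q * (j : ℕ))) = d j := by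
    rw [hf, Polynomial.finset_sum_coeff, Finset.sum_eq_single j]
    · simp [Polynomial.coeff_monomial]
    · intro b _ hbj
      rw [Polynomial.coeff_monomial, if_neg]
      intro hEq
      apply hbj
      have := Nat.pow_right_injective hp.two_le hEq
      exact Fin.ext (Nat.eq_of_mul_eq_mul_left hq this)
    · simp
  rw [hfz] at hcoeff
  simpa using hcoeff.symm
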